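/- Let n ≥ 7 and let p, q be positive integers with p + q = n. Let B be the n×n block matrix [[C_p, X],[0, C_q]] where X is a nonzero p×q 0-1 matrix. Then B has finite stable index and θ(B) ≤ g(n). -/
import Mathlib


/-- A matrix over ℕ is a 0-1 matrix iff all its entries are at most 1. -/
def IsZO {α β : Type*} (A : Matrix α β ℕ) : Prop := ∀ i j, A i j ≤ 1

/-- The stable index of a 0-1 matrix: the smallest positive `k` with `A ^ (k+1)`
not a 0-1 matrix, or `⊤` if no such `k` exists. -/
noncomputable def theta {α : Type*} [Fintype α] [DecidableEq α]
    (A : Matrix α α ℕ) : ℕ∞ :=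
  sInf ((fun k : ℕ => (k : ℕ∞)) '' {k : ℕ | 1 ≤ k ∧ ¬ IsZO (A ^ (k + 1))})

/-- `g(n)` from the paper. -/
def g (n : ℕ) : ℕ :=
  if n % 2 = 1 then (n ^ 2 - 1) / 4
  else if n % 4 = 0 then (n ^ 2 - 4) / 4
  else (n ^ 2 - 16) / 4

/-- Basic circulant 0-1 matrix of order `n`. -/
def Cmat (n : ℕ) : Matrix (Fin n) (Fin n) ℕ :=
  Matrix.of fun i j => if (j : ℕ) = ((i : ℕ) + 1) % n then 1 else 0

/-- Condition (★) on `(n, p, q)`. -/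
def StarCond (n p q : ℕ) : Prop :=
  p + q = n ∧
  ((n % 2 = 1 ∧ ({p, q} : Finset ℕ) = {(n + 1) / 2, (n - 1) / 2}) ∨
   (n % 4 = 0 ∧ ({p, q} : Finset ℕ) = {(n + 2) / 2, (n - 2) / 2}) ∨
   (n % 4 = 2 ∧ ({p, q} : Finset ℕ) = {(n + 4) / 2, (n - 4) / 2}))

/-! ### Auxiliary lemmas -/

lemma Cpow (n : ℕ) (hn : 0 < n) (i : ℕ) :
    (Cmat n) ^ i = Matrix.of (fun a b : Fin n => if (b : ℕ) = ((a : ℕ) + i) % n then 1 else 0) := by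
  induction i with
  | zero =>
    ext a b
    simp [Matrix.one_apply, Nat.mod_eq_of_lt a.isLt, Fin.ext_iff, eq_comm]
  | succ i ih =>
    ext a b
    rw [pow_succ, ih, Matrix.mul_apply]
    have key : ∀ c : Fin n, (Matrix.of (fun a b : Fin n => if (b : ℕ) = ((a : ℕ) + i) % n then 1 else 0)) a c
        * Cmat n c b = if c = (⟨((a:ℕ)+i) % n, Nat.mod_lt _ hn⟩ : Fin n) then (Cmat n c b) else 0 := by
      intro c
      by_cases h : (c : ℕ) = ((a : ℕ) + i) % n
      · simp [Matrix.of_apply, h, Fin.ext_iff]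
      · simp [Matrix.of_apply, h, Fin.ext_iff]
    simp only [key]
    rw [Finset.sum_ite_eq' Finset.univ]
    simp only [Finset.mem_univ, if_true]
    simp only [Cmat, Matrix.of_apply]
    congr 1
    rw [Nat.mod_add_mod, ← Nat.add_assoc]

lemma Cpow_self (n : ℕ) (hn : 0 < n) : (Cmat n) ^ n = 1 := by
  rw [Cpow n hn]
  ext a b
  simp [Matrix.one_apply, Nat.add_mod_right, Nat.mod_eq_of_lt a.isLt, Fin.ext_iff, eq_comm]

lemma blockpow {p q : ℕ} (A : Matrix (Fin p) (Fin p) ℕ) (D : Matrix (Fin q) (Fin q) ℕ)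
    (X : Matrix (Fin p) (Fin q) ℕ) (m : ℕ) :
    (Matrix.fromBlocks A X 0 D) ^ m =
      Matrix.fromBlocks (A ^ m) (∑ i ∈ Finset.range m, A ^ i * X * D ^ (m - 1 - i)) 0 (D ^ m) := by
  induction m with
  | zero => simp [Matrix.fromBlocks_one]
  | succ m ih =>
    rw [pow_succ, ih, Matrix.fromBlocks_multiply]
    simp only [Matrix.mul_zero, Matrix.zero_mul, add_zero, zero_add]
    have htr : A ^ m * X + (∑ i ∈ Finset.range m, A ^ i * X * D ^ (m - 1 - i)) * D
        = ∑ i ∈ Finset.range (m + 1), A ^ i * X * D ^ (m + 1 - 1 - i) := by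
      rw [Matrix.sum_mul, Finset.sum_range_succ, add_comm]
      congr 1
      · refine Finset.sum_congr rfl fun i hi => ?_
        rw [Finset.mem_range] at hi
        rw [Matrix.mul_assoc, ← pow_succ]
        congr 2
        omega
      · simp
    rw [htr, ← pow_succ, ← pow_succ]

lemma keyd2 (L N2 k : ℕ) (h1 : 4 * L + k ≤ N2) : L ≤ (N2 - k) / 4 := by omega

lemma lcm_le_g_aux (p c : ℕ) (hp : 0 < p) (hn : 7 ≤ p + (p + c)) :
    Nat.lcm p (p + c) ≤ g (p + (p + c)) := by
  set q := p + c with hq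
  have hq0 : 0 < q := by omega
  have hLpq : Nat.lcm p q ≤ p * q := by
    refine Nat.le_of_dvd (Nat.mul_pos hp hq0) (Nat.lcm_dvd (dvd_mul_right p q) (dvd_mul_left q p))
  have e : (p + q) ^ 2 = 4 * (p * q) + c ^ 2 := by rw [hq]; ring
  unfold g
  split_ifs with h1 h2
  · -- n odd, c odd so c ≥ 1
    have hc : 1 ≤ c := by omega
    apply keyd2
    rw [e]
    have hcc : 1 ≤ c ^ 2 := by nlinarith
    have := Nat.mul_le_mul_left 4 hLpq
    omega
  · -- n % 4 = 0
    have hc2 : c % 2 = 0 := by omega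
    apply keyd2
    rw [e]
    rcases Nat.eq_zero_or_pos c with hc0 | hcpos
    · -- p = q
      subst hc0
      have hL : Nat.lcm p q = p := by rw [hq]; simp [Nat.lcm_self]
      have hp4 : 4 ≤ p := by omega
      have : p + 1 ≤ p * p := by nlinarith
      rw [hL]
      have hcc : (0:ℕ) ^ 2 = 0 := by norm_num
      nlinarith
    · have hc2' : 2 ≤ c := by omega
      have hcc : 4 ≤ c ^ 2 := by nlinarith
      have := Nat.mul_le_mul_left 4 hLpq
      omega
  · -- n % 4 = 2
    apply keyd2
    rw [e]
    rcases Nat.eq_zero_or_pos c with hc0 | hcpos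
    · subst hc0
      have hL : Nat.lcm p q = p := by rw [hq]; simp [Nat.lcm_self]
      have hp4 : 4 ≤ p := by omega
      rw [hL]
      nlinarith
    · have hc2 : c % 2 = 0 := by omega
      rcases eq_or_ne c 2 with hc2' | hcne
      · -- c = 2, both even
        subst hc2'
        have hpe : p % 2 = 0 := by omega
        have h2p : 2 ∣ p := Nat.dvd_of_mod_eq_zero hpe
        have h2q : 2 ∣ q := by omega
        have hd : 2 ≤ Nat.gcd p q :=
          Nat.le_of_dvd (Nat.gcd_pos_of_pos_left q hp) (Nat.dvd_gcd h2p h2q)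
        have h2L : 2 * Nat.lcm p q ≤ p * q := by
          calc 2 * Nat.lcm p q ≤ Nat.gcd p q * Nat.lcm p q :=
                Nat.mul_le_mul_right _ hd
            _ = p * q := Nat.gcd_mul_lcm p q
        have hp4 : 4 ≤ p := by omega
        have hq6 : 6 ≤ q := by omega
        have h24 : 24 ≤ p * q := Nat.mul_le_mul hp4 hq6
        have hcc : (2:ℕ) ^ 2 = 4 := by norm_num
        omega
      · have hc4 : 4 ≤ c := by omega
        have hcc : 16 ≤ c ^ 2 := by nlinarith
        have := Nat.mul_le_mul_left 4 hLpq
        omega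

lemma lcm_le_g (p q : ℕ) (hp : 0 < p) (hq : 0 < q) (hn : 7 ≤ p + q) :
    Nat.lcm p q ≤ g (p + q) := by
  rcases le_total p q with h | h
  · obtain ⟨c, rfl⟩ := Nat.exists_eq_add_of_le h
    exact lcm_le_g_aux p c hp hn
  · obtain ⟨c, rfl⟩ := Nat.exists_eq_add_of_le h
    have h2 := lcm_le_g_aux q c hq (by omega)
    rw [Nat.lcm_comm, show q + c + q = q + (q + c) from by omega]
    exact h2

theorem stmt_9 (p q : ℕ) (hp : 0 < p) (hq : 0 < q) (hn : 7 ≤ p + q)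
    (X : Matrix (Fin p) (Fin q) ℕ) (hX : IsZO X) (hX0 : X ≠ 0) :
    theta (Matrix.fromBlocks (Cmat p) X 0 (Cmat q)) ≠ ⊤ ∧
    theta (Matrix.fromBlocks (Cmat p) X 0 (Cmat q)) ≤ (g (p + q) : ℕ∞) := by
  set B := Matrix.fromBlocks (Cmat p) X 0 (Cmat q) with hB
  set L := Nat.lcm p q with hL
  have hL1 : 1 ≤ L := Nat.pos_of_ne_zero (Nat.lcm_ne_zero (by omega) (by omega))
  have hCpL : (Cmat p) ^ L = 1 := by
    obtain ⟨t, ht⟩ := Nat.dvd_lcm_left p q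
    rw [hL, ht, pow_mul, Cpow_self p hp, one_pow]
  have hCqL : (Cmat q) ^ L = 1 := by
    obtain ⟨t, ht⟩ := Nat.dvd_lcm_right p q
    rw [hL, ht, pow_mul, Cpow_self q hq, one_pow]
  -- a nonzero entry of X
  have hex : ∃ a b, X a b ≠ 0 := by
    by_contra h
    push_neg at h
    exact hX0 (by ext a b; simpa using h a b)
  obtain ⟨a0, b0, hab⟩ := hex
  have hab1 : 1 ≤ X a0 b0 := Nat.one_le_iff_ne_zero.mpr hab
  -- the top-right block of B^(L+1) has an entry ≥ 2
  have hge : 2 ≤ (B ^ (L + 1)) (Sum.inl a0) (Sum.inr b0) := by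
    rw [hB, blockpow, Matrix.fromBlocks_apply₁₂, Matrix.sum_apply]
    set f : ℕ → ℕ := fun i => ((Cmat p) ^ i * X * (Cmat q) ^ (L + 1 - 1 - i)) a0 b0 with hf
    have hsub : ({0, L} : Finset ℕ) ⊆ Finset.range (L + 1) := by
      intro x hx
      simp only [Finset.mem_insert, Finset.mem_singleton] at hx
      rw [Finset.mem_range]
      omega
    have hpair : ∑ i ∈ ({0, L} : Finset ℕ), f i ≤ ∑ i ∈ Finset.range (L + 1), f i :=
      Finset.sum_le_sum_of_subset hsub
    have hne : (0 : ℕ) ≠ L := by omega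
    rw [Finset.sum_pair hne] at hpair
    have hf0 : f 0 = X a0 b0 := by
      simp only [hf]
      rw [pow_zero, Matrix.one_mul, Nat.add_sub_cancel, Nat.sub_zero, hCqL, Matrix.mul_one]
    have hfL : f L = X a0 b0 := by
      simp only [hf]
      rw [hCpL, Matrix.one_mul, Nat.add_sub_cancel, Nat.sub_self, pow_zero, Matrix.mul_one]
    refine le_trans ?_ hpair
    rw [hf0, hfL]
    omega
  have hnot : ¬ IsZO (B ^ (L + 1)) := by
    intro hzo
    have hY := hzo (Sum.inl a0) (Sum.inr b0)
    omega
  have hmem : (L : ℕ∞) ∈ ((fun k : ℕ => (k : ℕ∞)) '' {k : ℕ | 1 ≤ k ∧ ¬ IsZO (B ^ (k + 1))}) :=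
    ⟨L, ⟨hL1, hnot⟩, rfl⟩
  have hle : theta B ≤ (L : ℕ∞) := sInf_le hmem
  constructor
  · exact ne_top_of_le_ne_top (WithTop.coe_ne_top) hle
  · exact hle.trans (by exact_mod_cast lcm_le_g p q hp hq hn)
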